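/- arXiv:1112.2199 — 7 statements merged into one kernel-verified Lean document; each statement's English description precedes it below -/
import Mathlib

section
/- Let G be a finite abelian group with a free Brauer action on a Brauer graph (Γ, 𝔬, m), and let i be an edge incident with a vertex μ. Then there exist an integer k with 1 ≤ k ≤ val(μ), an integer s ≥ 0, and g ∈ G such that: (1) val(μ̄) = k in the orbit graph; (2) the successor sequence of i at μ is i = i₁, i₂, …, i_k, i₁^g, i₂^g, …, i_k^g, …, i₁^{g^s}, …, i_k^{g^s}; and (3) val(μ) = val(μ̄)(s+1). -/
/-- A Brauer graph `(Γ, 𝔬, m)`, presented via half-edges: `H` is the (finite, nonempty)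
set of half-edges, `σ` is the successor permutation whose cycle at a vertex lists the
incident half-edges in the cyclic order `𝔬` (a loop contributes two half-edges, i.e. is
"listed twice"), `ι` is the fixed-point-free involution pairing the two half-edges of
each edge, `v` assigns to each half-edge its vertex (so the fibres of `v` are exactly
the cycles of `σ`), the graph is connected, and `m` is the multiplicity function. -/
structure BrauerGraph where
  H : Type
  V : Type
  fintypeH : Fintype H
  decEqH : DecidableEq H
  fintypeV : Fintype V
  decEqV : DecidableEq V
  nonemptyH : Nonempty H
  σ : Equiv.Perm H
  ι : Equiv.Perm H
  ι_invol : ∀ h, ι (ι h) = h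
  ι_ne : ∀ h, ι h ≠ h
  v : H → V
  v_surj : Function.Surjective v
  v_eq_iff : ∀ h h', v h = v h' ↔ ∃ n : ℤ, (σ ^ n) h = h'
  connected : ∀ h h' : H, ∃ g ∈ Subgroup.closure ({σ, ι} : Set (Equiv.Perm H)), g h = h'
  m : V → ℕ
  m_pos : ∀ μ, 0 < m μ

attribute [instance] BrauerGraph.fintypeH BrauerGraph.decEqH
attribute [instance] BrauerGraph.fintypeV BrauerGraph.decEqV

namespace BrauerGraph

variable (Γ : BrauerGraph)

/-- The valency of a vertex: the number of incident half-edges (loops counted twice). -/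
noncomputable def val (μ : Γ.V) : ℕ := Nat.card {h : Γ.H // Γ.v h = μ}

end BrauerGraph

/-- A Brauer action of a group `G` on a Brauer graph: a faithful action on half-edges
commuting with the successor permutation (i.e. orientation/successor preserving) and
with the edge involution (i.e. an action by graph automorphisms), and preserving the
multiplicity function. -/
structure BrauerAction (G : Type) [Group G] (Γ : BrauerGraph) where
  e : G →* Equiv.Perm Γ.H
  faithful : Function.Injective e
  comm_σ : ∀ g h, e g (Γ.σ h) = Γ.σ (e g h)
  comm_ι : ∀ g h, e g (Γ.ι h) = Γ.ι (e g h)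
  m_inv : ∀ g h, Γ.m (Γ.v (e g h)) = Γ.m (Γ.v h)

namespace BrauerAction

variable {G : Type} [Group G] {Γ : BrauerGraph}

/-- A free Brauer action: the action is free on the set of edges (loops counted twice,
i.e. on half-edges). -/
def IsFree (A : BrauerAction G Γ) : Prop := ∀ (g : G) (h : Γ.H), A.e g h = h → g = 1

/-- The orbit equivalence relation of the action on half-edges. -/
def orbSetoid (A : BrauerAction G Γ) : Setoid Γ.H where
  r h h' := ∃ g : G, A.e g h = h'
  iseqv := by
    refine ⟨fun h => ⟨1, by simp⟩, ?_, ?_⟩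
    · rintro h h' ⟨g, hg⟩
      exact ⟨g⁻¹, by rw [← hg, ← Equiv.Perm.mul_apply, ← map_mul]; simp⟩
    · rintro a b c ⟨g₁, hg₁⟩ ⟨g₂, hg₂⟩
      exact ⟨g₂ * g₁, by rw [map_mul, Equiv.Perm.mul_apply, hg₁, hg₂]⟩

/-- The orbit equivalence relation of the action restricted to a subset of half-edges. -/
def subOrbSetoid (A : BrauerAction G Γ) (P : Γ.H → Prop) : Setoid {h : Γ.H // P h} where
  r p q := ∃ g : G, A.e g p.1 = q.1
  iseqv := by
    refine ⟨fun p => ⟨1, by simp⟩, ?_, ?_⟩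
    · rintro p q ⟨g, hg⟩
      exact ⟨g⁻¹, by rw [← hg, ← Equiv.Perm.mul_apply, ← map_mul]; simp⟩
    · rintro a b c ⟨g₁, hg₁⟩ ⟨g₂, hg₂⟩
      exact ⟨g₂ * g₁, by rw [map_mul, Equiv.Perm.mul_apply, hg₁, hg₂]⟩

/-- The induced action of `g ∈ G` on vertices (defined via a chosen half-edge
in the fibre of the vertex). -/
noncomputable def vmap (A : BrauerAction G Γ) (g : G) (μ : Γ.V) : Γ.V :=
  Γ.v (A.e g (Γ.v_surj μ).choose)

/-- The valency, in the orbit graph `Γ/G`, of the orbit vertex `μ̄` of `μ`: the number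
of `G`-orbits of half-edges incident with a vertex in the orbit of `μ`. -/
noncomputable def orbVal (A : BrauerAction G Γ) (μ : Γ.V) : ℕ :=
  Nat.card (Quotient (A.subOrbSetoid (fun h => ∃ a : G, Γ.v (A.e a h) = μ)))

/-- The multiplicity function `m̄(μ̄) = val(μ)·m(μ)/val(μ̄)` of the orbit graph,
expressed on representatives. -/
noncomputable def mbar (A : BrauerAction G Γ) (μ : Γ.V) : ℕ :=
  Γ.val μ * Γ.m μ / A.orbVal μ

end BrauerAction

namespace BrauerGraph

variable (Γ : BrauerGraph) {G : Type} [CommGroup G]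

/-- `ω_μ`: the product of the values of a successor weighting `W` over all successor
pairs at the vertex `μ` (a successor pair `(i, σ i)` is identified with the half-edge
`i`). -/
noncomputable def omega (W : Γ.H → G) (μ : Γ.V) : G :=
  ∏ h ∈ Finset.univ.filter (fun h => Γ.v h = μ), W h

/-- `ω(i₁, i_{r+1})`: the product of the weights along the first `r` steps of the
successor sequence of the half-edge `h`. -/
noncomputable def wpath (W : Γ.H → G) (h : Γ.H) (r : ℕ) : G :=
  ∏ t ∈ Finset.range r, W ((Γ.σ ^ t) h)

/-- The generating relation for the equivalence classes `[i, H_{μ,s}]` defining the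
vertices of the Brauer covering graph `Δ_W`: a pair `(i, g)` (representing the pair of
`i` and the coset `H_{v i}·g`) is related to `(σ i, g·W(i))`, and to `(i, g·ω_{v i})`
(the latter identifies representatives of the same coset of `H_μ = ⟨ω_μ⟩`). -/
def covRel (W : Γ.H → G) : Γ.H × G → Γ.H × G → Prop := fun p q =>
  (q.1 = Γ.σ p.1 ∧ q.2 = p.2 * W p.1) ∨ (q.1 = p.1 ∧ q.2 = p.2 * Γ.omega W (Γ.v p.1))

end BrauerGraph

/-! Since `G` acts through automorphisms commuting with `σ`, the successor permutation descends
to the set of `G`-orbits of half-edges. The cycle of `σ` through `h` has length `val μ`, and the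
induced cycle through the orbit of `h` runs exactly through the orbits at `μ̄`, so its length is
`k = val μ̄`. The period `k` of the orbit divides the period `val μ` of `h`, and `σ^k h = h^g` for
some `g`; commuting `g` past powers of `σ` gives `σ^(rk+t) h = (σ^t h)^(g^r)`. -/

open Function

theorem Function.natCard_range_iterate_eq_minimalPeriod {α : Type*} {f : α → α} {x : α}
    (hx : x ∈ periodicPts f) : Nat.card (Set.range (f^[·] x)) = minimalPeriod f x := by
  have hrange : Set.range (f^[·] x) = Set.range (fun i : Fin (minimalPeriod f x) => f^[i] x) := by
    ext y
    constructor
    · rintro ⟨n, rfl⟩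
      exact ⟨⟨n % minimalPeriod f x, Nat.mod_lt n (minimalPeriod_pos_of_mem_periodicPts hx)⟩,
        iterate_mod_minimalPeriod_eq⟩
    · rintro ⟨i, rfl⟩
      exact ⟨i, rfl⟩
  have hinj : Injective (fun i : Fin (minimalPeriod f x) => f^[i] x) := fun i j hij =>
    Fin.ext (iterate_injOn_Iio_minimalPeriod i.isLt j.isLt hij)
  rw [hrange, Nat.card_range_of_injective hinj, Nat.card_eq_fintype_card, Fintype.card_fin]

namespace BrauerGraph

variable (Γ : BrauerGraph)

theorem v_eq_v_iff_exists_iterate (h x : Γ.H) : Γ.v x = Γ.v h ↔ ∃ m : ℕ, Γ.σ^[m] h = x := by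
  rw [eq_comm, Γ.v_eq_iff]
  constructor
  · exact fun hcyc => Equiv.Perm.SameCycle.exists_nat_pow_eq hcyc
  · rintro ⟨m, hm⟩
    exact ⟨m, by rwa [zpow_natCast]⟩

theorem val_v_eq_minimalPeriod (h : Γ.H) : Γ.val (Γ.v h) = minimalPeriod Γ.σ h := by
  have hfibre : {x | Γ.v x = Γ.v h} = Set.range (Γ.σ^[·] h) := by
    ext x
    exact Γ.v_eq_v_iff_exists_iterate h x
  rw [← natCard_range_iterate_eq_minimalPeriod (Γ.σ.injective.mem_periodicPts h), ← hfibre]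
  rfl

end BrauerGraph

namespace BrauerAction

variable {G : Type} [Group G] {Γ : BrauerGraph} (A : BrauerAction G Γ)

theorem e_apply_σ_pow_apply (g : G) (t : ℕ) (x : Γ.H) :
    A.e g ((Γ.σ ^ t) x) = (Γ.σ ^ t) (A.e g x) := by
  have hcomm : Commute (A.e g) Γ.σ := Equiv.ext fun y => A.comm_σ g y
  rw [← Equiv.Perm.mul_apply, (hcomm.pow_right t).eq, Equiv.Perm.mul_apply]

def orbitSucc : Quotient A.orbSetoid → Quotient A.orbSetoid :=
  Quotient.map Γ.σ fun _ _ ⟨g, hg⟩ => ⟨g, by rw [A.comm_σ, hg]⟩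

theorem orbitSucc_iterate_mk (t : ℕ) (x : Γ.H) :
    A.orbitSucc^[t] (Quotient.mk _ x) = Quotient.mk _ ((Γ.σ ^ t) x) := by
  induction t with
  | zero => rfl
  | succ t ih =>
    rw [iterate_succ_apply', ih, pow_succ', Equiv.Perm.mul_apply]
    rfl

theorem isPeriodicPt_orbitSucc_minimalPeriod (h : Γ.H) :
    IsPeriodicPt A.orbitSucc (minimalPeriod Γ.σ h) (Quotient.mk _ h) := by
  rw [IsPeriodicPt, IsFixedPt, orbitSucc_iterate_mk, ← Equiv.Perm.iterate_eq_pow,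
    iterate_minimalPeriod]

theorem mk_mem_periodicPts_orbitSucc (h : Γ.H) : Quotient.mk _ h ∈ periodicPts A.orbitSucc :=
  mk_mem_periodicPts (minimalPeriod_pos_of_mem_periodicPts (Γ.σ.injective.mem_periodicPts h))
    (A.isPeriodicPt_orbitSucc_minimalPeriod h)

theorem orbVal_v_eq_minimalPeriod (h : Γ.H) :
    A.orbVal (Γ.v h) = minimalPeriod A.orbitSucc (Quotient.mk _ h) := by
  let P : Γ.H → Prop := fun x => ∃ a : G, Γ.v (A.e a x) = Γ.v h
  let forget : Quotient (A.subOrbSetoid P) → Quotient A.orbSetoid :=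
    Quotient.map Subtype.val fun _ _ hxy => hxy
  have hinj : Injective forget := by
    rintro ⟨x⟩ ⟨y⟩ hxy
    exact Quotient.sound (Quotient.exact (s := A.orbSetoid) hxy)
  have hrange : Set.range forget = Set.range (A.orbitSucc^[·] (Quotient.mk _ h)) := by
    ext q
    constructor
    · rintro ⟨⟨x, a, hax⟩, rfl⟩
      obtain ⟨m, hm⟩ := (Γ.v_eq_v_iff_exists_iterate h (A.e a x)).1 hax
      refine ⟨m, ?_⟩
      show A.orbitSucc^[m] (Quotient.mk _ h) = Quotient.mk A.orbSetoid x
      rw [orbitSucc_iterate_mk, ← Equiv.Perm.iterate_eq_pow, hm]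
      exact Quotient.sound ⟨a⁻¹, by rw [map_inv, Equiv.Perm.inv_def, Equiv.symm_apply_apply]⟩
    · rintro ⟨m, rfl⟩
      refine ⟨Quotient.mk _ ⟨(Γ.σ ^ m) h, 1, ?_⟩, (orbitSucc_iterate_mk A m h).symm⟩
      rw [map_one, Equiv.Perm.one_apply, ← Equiv.Perm.iterate_eq_pow]
      exact (Γ.v_eq_v_iff_exists_iterate h _).2 ⟨m, rfl⟩
  rw [orbVal, ← Nat.card_range_of_injective hinj, hrange,
    natCard_range_iterate_eq_minimalPeriod (A.mk_mem_periodicPts_orbitSucc h)]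

theorem exists_e_apply_eq_σ_pow_minimalPeriod (h : Γ.H) :
    ∃ g : G, A.e g h = (Γ.σ ^ minimalPeriod A.orbitSucc (Quotient.mk _ h)) h := by
  have hmk : Quotient.mk A.orbSetoid h =
      Quotient.mk _ ((Γ.σ ^ minimalPeriod A.orbitSucc (Quotient.mk _ h)) h) := by
    rw [← orbitSucc_iterate_mk, iterate_minimalPeriod]
  exact Quotient.exact hmk

theorem σ_pow_mul_add_apply {g : G} {k : ℕ} {h : Γ.H} (hg : A.e g h = (Γ.σ ^ k) h)
    (r t : ℕ) : (Γ.σ ^ (r * k + t)) h = A.e (g ^ r) ((Γ.σ ^ t) h) := by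
  induction r with
  | zero => simp
  | succ r ih =>
    rw [add_one_mul, add_right_comm, pow_add, Equiv.Perm.mul_apply, ← hg, ← e_apply_σ_pow_apply,
      ih, pow_succ', map_mul, Equiv.Perm.mul_apply]

end BrauerAction

theorem successor_sequence_structure_general {G : Type} [CommGroup G]
    (Γ : BrauerGraph) (A : BrauerAction G Γ) (h : Γ.H) :
    ∃ (k s : ℕ) (g : G),
      1 ≤ k ∧ k ≤ Γ.val (Γ.v h) ∧
      A.orbVal (Γ.v h) = k ∧
      (∀ r t : ℕ, r ≤ s → t < k →
        (Γ.σ ^ (r * k + t)) h = A.e (g ^ r) ((Γ.σ ^ t) h)) ∧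
      Γ.val (Γ.v h) = A.orbVal (Γ.v h) * (s + 1) := by
  set k := minimalPeriod A.orbitSucc (Quotient.mk _ h)
  have hn : 0 < Γ.val (Γ.v h) := Γ.val_v_eq_minimalPeriod h ▸
    minimalPeriod_pos_of_mem_periodicPts (Γ.σ.injective.mem_periodicPts h)
  obtain ⟨q, hq⟩ : k ∣ Γ.val (Γ.v h) :=
    Γ.val_v_eq_minimalPeriod h ▸ (A.isPeriodicPt_orbitSucc_minimalPeriod h).minimalPeriod_dvd
  have hq0 : 0 < q := Nat.pos_of_mul_pos_left (hq ▸ hn)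
  obtain ⟨g, hg⟩ := A.exists_e_apply_eq_σ_pow_minimalPeriod h
  refine ⟨k, q - 1, g, Nat.pos_of_dvd_of_pos ⟨q, hq⟩ hn, Nat.le_of_dvd hn ⟨q, hq⟩,
    A.orbVal_v_eq_minimalPeriod h, fun r t _ _ => A.σ_pow_mul_add_apply hg r t, ?_⟩
  rw [A.orbVal_v_eq_minimalPeriod, hq, Nat.sub_add_cancel hq0]

/-- For a free Brauer action of a finite abelian group `G` on a Brauer
graph and a (half-)edge `h` incident with the vertex `μ = v h`, there are `k`, `s`, `g`
with (1) `val(μ̄) = k`, (2) the successor sequence of `h` at `μ` is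
`h, σh, …, σ^{k-1}h, h^g, …, (σ^{k-1}h)^g, …, h^{g^s}, …, (σ^{k-1}h)^{g^s}`, and
(3) `val(μ) = val(μ̄)(s+1)`. -/
theorem successor_sequence_structure {G : Type} [CommGroup G] [Fintype G]
    (Γ : BrauerGraph) (A : BrauerAction G Γ) (hfree : A.IsFree) (h : Γ.H) :
    ∃ (k s : ℕ) (g : G),
      1 ≤ k ∧ k ≤ Γ.val (Γ.v h) ∧
      A.orbVal (Γ.v h) = k ∧
      (∀ r t : ℕ, r ≤ s → t < k →
        (Γ.σ ^ (r * k + t)) h = A.e (g ^ r) ((Γ.σ ^ t) h)) ∧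
      Γ.val (Γ.v h) = A.orbVal (Γ.v h) * (s + 1) :=
  successor_sequence_structure_general Γ A h
end

section
/- Suppose a finite abelian group G has a free Brauer action on a Brauer graph (Γ, 𝔬, m). Then the function m̄ : (Γ/G)₀ → ℕ∖{0}, μ̄ ↦ val(μ)·m(μ)/val(μ̄), is well-defined (independent of the representative μ of the orbit μ̄), and takes values in positive integers. -/
-- AUX START
namespace BrauerAction
variable {G : Type} [Group G] {Γ : BrauerGraph}

lemma e_inv_e (A : BrauerAction G Γ) (g : G) (h : Γ.H) : A.e g⁻¹ (A.e g h) = h := by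
  rw [← Equiv.Perm.mul_apply, ← map_mul, inv_mul_cancel, map_one, Equiv.Perm.one_apply]

lemma v_eqv (A : BrauerAction G Γ) (g : G) {h h' : Γ.H} (hv : Γ.v h = Γ.v h') :
    Γ.v (A.e g h) = Γ.v (A.e g h') := by
  obtain ⟨n, hn⟩ := (Γ.v_eq_iff h h').mp hv
  refine (Γ.v_eq_iff _ _).mpr ⟨n, ?_⟩
  have hc : Commute (A.e g) Γ.σ := Equiv.ext fun x => A.comm_σ g x
  calc (Γ.σ ^ n) (A.e g h) = (Γ.σ ^ n * A.e g) h := rfl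
    _ = (A.e g * Γ.σ ^ n) h := by rw [(hc.zpow_right n).eq]
    _ = A.e g ((Γ.σ ^ n) h) := rfl
    _ = A.e g h' := by rw [hn]

lemma vmap_spec (A : BrauerAction G Γ) (g : G) {h : Γ.H} {μ : Γ.V} (hv : Γ.v h = μ) :
    Γ.v (A.e g h) = A.vmap g μ :=
  A.v_eqv g (hv.trans (Γ.v_surj μ).choose_spec.symm)

lemma vmap_inv (A : BrauerAction G Γ) (g : G) (μ : Γ.V) :
    A.vmap g⁻¹ (A.vmap g μ) = μ := by
  obtain ⟨h, hv⟩ := Γ.v_surj μ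
  have h1 : Γ.v (A.e g h) = A.vmap g μ := A.vmap_spec g hv
  have h2 : Γ.v (A.e g⁻¹ (A.e g h)) = A.vmap g⁻¹ (A.vmap g μ) := A.vmap_spec g⁻¹ h1
  rw [A.e_inv_e, hv] at h2; exact h2.symm

lemma val_eq_orbVal_mul [Fintype G] (A : BrauerAction G Γ) (hfree : A.IsFree) (μ : Γ.V) :
    Γ.val μ = A.orbVal μ * Nat.card {g : G // A.vmap g μ = μ} := by
  classical
  set P : Γ.H → Prop := fun h => ∃ a : G, Γ.v (A.e a h) = μ with hP
  let f : {h : Γ.H // Γ.v h = μ} → Quotient (A.subOrbSetoid P) := fun h =>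
    Quotient.mk _ ⟨h.1, ⟨1, by simp [h.2]⟩⟩
  have card_fiber : ∀ q : Quotient (A.subOrbSetoid P),
      Nat.card {h : {h : Γ.H // Γ.v h = μ} // f h = q}
      = Nat.card {g : G // A.vmap g μ = μ} := by
    intro q
    obtain ⟨p, rfl⟩ := Quotient.exists_rep q
    obtain ⟨a, ha⟩ := p.2
    refine (Nat.card_congr (Equiv.ofBijective (fun g => ?_) ⟨?_, ?_⟩)).symm
    · refine ⟨⟨A.e g.1 (A.e a p.1), by rw [A.vmap_spec g.1 ha]; exact g.2⟩, ?_⟩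
      apply Quotient.sound
      refine ⟨(g.1 * a)⁻¹, ?_⟩
      show A.e (g.1 * a)⁻¹ (A.e g.1 (A.e a p.1)) = p.1
      simp only [← Equiv.Perm.mul_apply, ← map_mul]
      simp
    · rintro g g' hgg
      have := congrArg (fun x => (x.1 : {h : Γ.H // Γ.v h = μ}).1) hgg
      simp only at this
      have h2 : A.e (g'.1⁻¹ * g.1) (A.e a p.1) = A.e a p.1 := by
        rw [map_mul, Equiv.Perm.mul_apply, this, A.e_inv_e]
      have := hfree _ _ h2
      ext
      exact (inv_mul_eq_one.mp this).symm
    · rintro ⟨h, hq⟩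
      obtain ⟨g, hg⟩ := Quotient.exact hq.symm
      -- hg : A.e g p.1 = h.1 ? direction check
      refine ⟨⟨g * a⁻¹, ?_⟩, ?_⟩
      · have hv1 : Γ.v (A.e a⁻¹ (A.e a p.1)) = A.vmap a⁻¹ μ := A.vmap_spec a⁻¹ ha
        rw [A.e_inv_e] at hv1
        have hv2 : Γ.v (A.e (g * a⁻¹) (A.e a p.1)) = A.vmap (g * a⁻¹) μ :=
          A.vmap_spec (g * a⁻¹) ha
        rw [map_mul, Equiv.Perm.mul_apply] at hv2
        rw [← hv2]
        have : A.e a⁻¹ (A.e a p.1) = p.1 := A.e_inv_e a p.1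
        rw [this, hg]
        exact h.2
      · ext
        show A.e (g * a⁻¹) (A.e a p.1) = h.1
        rw [map_mul, Equiv.Perm.mul_apply, A.e_inv_e, hg]
  have key : Γ.val μ = Nat.card (Σ q : Quotient (A.subOrbSetoid P),
      {h : {h : Γ.H // Γ.v h = μ} // f h = q}) :=
    Nat.card_congr (Equiv.sigmaFiberEquiv f).symm
  rw [key, Nat.card_eq_fintype_card, Fintype.card_sigma]
  have hc : ∀ q, Fintype.card {h : {h : Γ.H // Γ.v h = μ} // f h = q}
      = Nat.card {g : G // A.vmap g μ = μ} := fun q => by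
    rw [← Nat.card_eq_fintype_card]; exact card_fiber q
  simp only [hc]
  rw [Finset.sum_const, smul_eq_mul, Finset.card_univ, orbVal]
  congr 1
  exact (Nat.card_eq_fintype_card (α := Quotient (A.subOrbSetoid P))).symm

lemma e_e_inv (A : BrauerAction G Γ) (g : G) (h : Γ.H) : A.e g (A.e g⁻¹ h) = h := by
  rw [← Equiv.Perm.mul_apply, ← map_mul, mul_inv_cancel, map_one, Equiv.Perm.one_apply]

lemma m_vmap (A : BrauerAction G Γ) (g : G) (μ : Γ.V) : Γ.m (A.vmap g μ) = Γ.m μ := by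
  obtain ⟨h, hv⟩ := Γ.v_surj μ
  have := A.m_inv g h
  rwa [A.vmap_spec g hv, hv] at this

lemma val_vmap (A : BrauerAction G Γ) (g : G) (μ : Γ.V) : Γ.val (A.vmap g μ) = Γ.val μ := by
  refine Nat.card_congr ⟨fun h => ⟨A.e g⁻¹ h.1, ?_⟩, fun h => ⟨A.e g h.1, A.vmap_spec g h.2⟩,
    fun h => Subtype.ext (A.e_e_inv g h.1), fun h => Subtype.ext (A.e_inv_e g h.1)⟩
  rw [A.vmap_spec g⁻¹ h.2, A.vmap_inv]

lemma orbVal_vmap (A : BrauerAction G Γ) (g : G) (μ : Γ.V) :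
    A.orbVal (A.vmap g μ) = A.orbVal μ := by
  have hP : (fun h => ∃ a : G, Γ.v (A.e a h) = A.vmap g μ)
      = (fun h => ∃ a : G, Γ.v (A.e a h) = μ) := by
    funext h
    apply propext
    constructor
    · rintro ⟨a, ha⟩
      exact ⟨g⁻¹ * a, by rw [map_mul, Equiv.Perm.mul_apply, A.vmap_spec g⁻¹ ha, A.vmap_inv]⟩
    · rintro ⟨a, ha⟩
      exact ⟨g * a, by rw [map_mul, Equiv.Perm.mul_apply, A.vmap_spec g ha]⟩
  unfold orbVal
  rw [hP]

end BrauerAction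


/-- For a free Brauer action of a finite abelian group `G` on a Brauer
graph `(Γ, 𝔬, m)`, the function `m̄(μ̄) = val(μ)·m(μ)/val(μ̄)` is well-defined
(independent of the representative of the orbit; in particular `val(μ̄)` divides
`val(μ)·m(μ)`) and takes positive values. -/
theorem mbar_well_defined {G : Type} [CommGroup G] [Fintype G]
    (Γ : BrauerGraph) (A : BrauerAction G Γ) (hfree : A.IsFree)
    (μ μ' : Γ.V) (horb : ∃ g : G, A.vmap g μ = μ') :
    A.orbVal μ ∣ Γ.val μ * Γ.m μ ∧ A.mbar μ = A.mbar μ' ∧ 0 < A.mbar μ := by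
  obtain ⟨g, rfl⟩ := horb
  have hval := A.val_eq_orbVal_mul hfree μ
  have hdvd : A.orbVal μ ∣ Γ.val μ * Γ.m μ :=
    ⟨Nat.card {g : G // A.vmap g μ = μ} * Γ.m μ, by rw [hval]; ring⟩
  have hv : 0 < Γ.val μ := by
    have : Nonempty {h : Γ.H // Γ.v h = μ} := ⟨⟨(Γ.v_surj μ).choose, (Γ.v_surj μ).choose_spec⟩⟩
    exact Nat.card_pos
  refine ⟨hdvd, ?_, ?_⟩
  · unfold BrauerAction.mbar
    rw [A.val_vmap, A.m_vmap, A.orbVal_vmap]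
  · have horb_pos : 0 < A.orbVal μ := by
      rcases Nat.eq_zero_or_pos (A.orbVal μ) with h0 | h
      · rw [h0, zero_mul] at hval; omega
      · exact h
    exact Nat.div_pos (Nat.le_of_dvd (Nat.mul_pos hv (Γ.m_pos μ)) hdvd) horb_pos
end

section
/- Let G be a finite abelian group with a Brauer action on a connected Brauer graph (Γ, 𝔬, m). If there exists g ∈ G and an edge i ∈ Γ₁ with i^g = i, then j^g = j for all edges j ∈ Γ₁. -/
/-! An automorphism commuting with `σ` and `ι` commutes with every element of the group they
generate; by connectedness this group is transitive on half-edges, so one fixed half-edge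
forces all of them to be fixed. -/

namespace BrauerAction

variable {G : Type} [Group G] {Γ : BrauerGraph} (A : BrauerAction G Γ)

theorem e_mem_centralizer_closure (g : G) :
    A.e g ∈ Subgroup.centralizer
      (Subgroup.closure ({Γ.σ, Γ.ι} : Set (Equiv.Perm Γ.H)) : Set (Equiv.Perm Γ.H)) := by
  rw [Subgroup.centralizer_closure, Subgroup.mem_centralizer_iff]
  rintro w (rfl | rfl) <;> ext x
  · exact (A.comm_σ g x).symm
  · exact (A.comm_ι g x).symm

end BrauerAction

theorem fix_one_edge_fix_all_general {G : Type} [CommGroup G]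
    (Γ : BrauerGraph) (A : BrauerAction G Γ) (g : G) (h : Γ.H)
    (hfix : A.e g h = h) :
    ∀ h' : Γ.H, A.e g h' = h' := by
  intro h'
  obtain ⟨w, hw, rfl⟩ := Γ.connected h h'
  have hcomm : w * A.e g = A.e g * w := A.e_mem_centralizer_closure g w hw
  rw [← Equiv.Perm.mul_apply, ← hcomm, Equiv.Perm.mul_apply, hfix]

/-- For a Brauer action of a finite abelian group `G` on a connected
Brauer graph, if some `g ∈ G` fixes one edge then it fixes every edge. -/
theorem fix_one_edge_fix_all {G : Type} [CommGroup G] [Fintype G]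
    (Γ : BrauerGraph) (A : BrauerAction G Γ) (g : G) (h : Γ.H)
    (hfix : A.e g h = h) :
    ∀ h' : Γ.H, A.e g h' = h' :=
  fix_one_edge_fix_all_general Γ A g h hfix
end

section
/- Let W: 𝒵_Δ → G be a Brauer weighting of a Brauer graph (Δ, 𝔬, m) and (Δ_W, 𝔬_W, m_W) the associated Brauer covering graph with its canonical G-action. Then the orbit of a vertex μ_d ∈ (Δ_W)₀ under G is exactly {μ_{d'} : d' ∈ 𝒟_μ}, and the orbit of an edge i_g ∈ (Δ_W)₁ is exactly {i_h : h ∈ G}. Consequently the orbit graph Δ_W/G is isomorphic to Δ as a graph. -/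
private lemma covRel_v {G : Type} [CommGroup G] (Γ : BrauerGraph) (W : Γ.H → G)
    {p q : Γ.H × G} (h : Relation.EqvGen (Γ.covRel W) p q) : Γ.v p.1 = Γ.v q.1 := by
  induction h with
  | rel x y hxy =>
      rcases hxy with ⟨h1, _⟩ | ⟨h1, _⟩
      · rw [h1]; exact ((Γ.v_eq_iff x.1 (Γ.σ x.1)).2 ⟨1, by simp⟩)
      · rw [h1]
  | refl x => rfl
  | symm x y _ ih => exact ih.symm
  | trans x y z _ _ ih1 ih2 => exact ih1.trans ih2

private lemma covRel_steps {G : Type} [CommGroup G] (Γ : BrauerGraph) (W : Γ.H → G)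
    (i : Γ.H) (x : G) (n : ℕ) :
    Relation.EqvGen (Γ.covRel W) (i, x) ((Γ.σ ^ n) i, x * Γ.wpath W i n) := by
  induction n with
  | zero => simp [BrauerGraph.wpath]; exact Relation.EqvGen.refl _
  | succ n ih =>
      refine Relation.EqvGen.trans _ _ _ ih (Relation.EqvGen.rel _ _ ?_)
      left
      constructor
      · simp [← Equiv.Perm.mul_apply, ← pow_succ, ← pow_succ']
      · simp [BrauerGraph.wpath, Finset.prod_range_succ, mul_assoc]

private lemma exists_nat_pow {Γ : BrauerGraph} {h h' : Γ.H}
    (hv : Γ.v h = Γ.v h') : ∃ n : ℕ, (Γ.σ ^ n) h = h' := by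
  obtain ⟨n, hn⟩ := (Γ.v_eq_iff h h').1 hv
  refine ⟨(n % (orderOf Γ.σ : ℤ)).toNat, ?_⟩
  have hpos : 0 < orderOf Γ.σ := orderOf_pos Γ.σ
  have hnn : 0 ≤ n % (orderOf Γ.σ : ℤ) :=
    Int.emod_nonneg n (by exact_mod_cast hpos.ne')
  have : (Γ.σ ^ ((n % (orderOf Γ.σ : ℤ)).toNat : ℤ)) h = h' := by
    rw [Int.toNat_of_nonneg hnn, zpow_mod_orderOf, hn]
  rwa [zpow_natCast] at this

/-- For a Brauer weighting `W` of a Brauer graph `(Δ, 𝔬, m)` with values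
in a finite abelian group `G` and the canonical `G`-action on the covering graph
`Δ_W`, the `G`-orbit of the vertex `μ_d` consists exactly of the vertices `μ_{d'}`,
`d' ∈ 𝒟_μ` (first conjunct: two vertex classes are in the same orbit iff they lie over
the same vertex `μ` of `Δ`), and the `G`-orbit of the edge `i_g` is `{i_a : a ∈ G}`
(second conjunct). Consequently the orbit graph `Δ_W/G` is isomorphic to `Δ`:
`G`-orbits of vertices of `Δ_W` biject with vertices of `Δ` and `G`-orbits of edges of
`Δ_W` biject with edges of `Δ` (third and fourth conjuncts). -/
theorem covering_orbits {G : Type} [CommGroup G] [Fintype G]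
    (Γ : BrauerGraph) (W : Γ.H → G)
    (hW : ∀ μ : Γ.V, orderOf (Γ.omega W μ) ∣ Γ.m μ) :
    (∀ p q : Γ.H × G,
      (∃ a : G, Relation.EqvGen (Γ.covRel W) (p.1, p.2 * a) q) ↔ Γ.v p.1 = Γ.v q.1) ∧
    (∀ p q : Γ.H × G, (∃ a : G, (p.1, p.2 * a) = q) ↔ p.1 = q.1) ∧
    (∃ φ : Quotient (Relation.EqvGen.setoid
        (fun p q : Γ.H × G => ∃ a : G, Relation.EqvGen (Γ.covRel W) (p.1, p.2 * a) q)) → Γ.V,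
      Function.Bijective φ ∧ ∀ p : Γ.H × G, φ (Quotient.mk _ p) = Γ.v p.1) ∧
    (∃ ψ : Quotient (Relation.EqvGen.setoid
        (fun p q : Γ.H × G => ∃ a : G, (p.1, p.2 * a) = q)) → Γ.H,
      Function.Bijective ψ ∧ ∀ p : Γ.H × G, ψ (Quotient.mk _ p) = p.1) := by
  have key : ∀ p q : Γ.H × G,
      (∃ a : G, Relation.EqvGen (Γ.covRel W) (p.1, p.2 * a) q) ↔ Γ.v p.1 = Γ.v q.1 := by
    intro p q
    constructor
    · rintro ⟨a, ha⟩
      exact covRel_v Γ W (p := (p.1, p.2 * a)) ha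
    · intro hv
      obtain ⟨n, hn⟩ := exists_nat_pow hv
      refine ⟨p.2⁻¹ * q.2 * (Γ.wpath W p.1 n)⁻¹, ?_⟩
      have := covRel_steps Γ W p.1 (p.2 * (p.2⁻¹ * q.2 * (Γ.wpath W p.1 n)⁻¹)) n
      rw [hn] at this
      have heq : p.2 * (p.2⁻¹ * q.2 * (Γ.wpath W p.1 n)⁻¹) * Γ.wpath W p.1 n = q.2 := by
        group
      rw [heq] at this
      exact this
  have key2 : ∀ p q : Γ.H × G, (∃ a : G, (p.1, p.2 * a) = q) ↔ p.1 = q.1 := by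
    intro p q
    constructor
    · rintro ⟨a, rfl⟩; rfl
    · intro h
      refine ⟨p.2⁻¹ * q.2, ?_⟩
      rw [h]; ext <;> simp
  refine ⟨key, key2, ?_, ?_⟩
  · refine ⟨Quotient.lift (fun p : Γ.H × G => Γ.v p.1) ?_, ⟨?_, ?_⟩, fun p => rfl⟩
    · intro p q hpq
      induction hpq with
      | rel x y hxy => exact (key x y).1 hxy
      | refl x => rfl
      | symm x y _ ih => exact ih.symm
      | trans x y z _ _ ih1 ih2 => exact ih1.trans ih2
    · intro x y
      induction x using Quotient.inductionOn with | _ p =>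
      induction y using Quotient.inductionOn with | _ q =>
      intro hvq
      exact Quotient.sound (Relation.EqvGen.rel _ _ ((key p q).2 hvq))
    · intro μ
      obtain ⟨h, hh⟩ := Γ.v_surj μ
      exact ⟨Quotient.mk _ (h, 1), hh⟩
  · refine ⟨Quotient.lift (fun p : Γ.H × G => p.1) ?_, ⟨?_, ?_⟩, fun p => rfl⟩
    · intro p q hpq
      induction hpq with
      | rel x y hxy => exact (key2 x y).1 hxy
      | refl x => rfl
      | symm x y _ ih => exact ih.symm
      | trans x y z _ _ ih1 ih2 => exact ih1.trans ih2
    · intro x y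
      induction x using Quotient.inductionOn with | _ p =>
      induction y using Quotient.inductionOn with | _ q =>
      intro hq
      exact Quotient.sound (Relation.EqvGen.rel _ _ ((key2 p q).2 hq))
    · intro h
      exact ⟨Quotient.mk _ (h, 1), rfl⟩
end

section
/- The successor weighting W on the orbit Brauer graph Γ̄ associated to a free Brauer action of a finite abelian group G on a Brauer graph (Γ, 𝔬, m) is a Brauer weighting; that is, ord(μ̄) divides m̄(μ̄) for every vertex μ̄ of Γ̄. -/
/-!
Let `c = val(μ)` be the length of the `σ`-cycle through `h`, and `r = val(μ̄)` the length of
the cycle through its orbit `h̄` under the permutation `σ̄` that `σ` induces on `Γ.H / G`. Then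
`r ∣ c`, say `c = r k`, so that `m̄(μ̄) = k m(μ)`. Lifting the closed successor path of
length `c` at `h̄` along `W`, starting from the representative of `h̄`, shows that `ω ^ k` moves
that representative to `σ^c (rep h̄) = rep h̄`; freeness gives `ω ^ k = 1`, hence
`ord(μ̄) ∣ k ∣ m̄(μ̄)`.
-/

open Function Finset

theorem Equiv.Perm.card_sameCycle {α : Type*} [Finite α] (f : Equiv.Perm α) (x : α) :
    Nat.card {y // f.SameCycle x y} = minimalPeriod f x := by
  have horbit : {y | f.SameCycle x y} = MulAction.orbit (Subgroup.zpowers f) x := by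
    ext y
    simp only [Set.mem_ofPred_eq, MulAction.mem_orbit_iff, Subgroup.exists_zpowers]
    rfl
  rw [← Set.coe_ofPred, horbit, Nat.card_congr (MulAction.orbitZPowersEquiv f x), Nat.card_zmod]
  rfl

theorem Function.Periodic.prod_range_mul {M : Type*} [CommMonoid M] {f : ℕ → M} {r : ℕ}
    (hf : Periodic f r) (k : ℕ) :
    ∏ s ∈ range (r * k), f s = (∏ s ∈ range r, f s) ^ k := by
  induction k with
  | zero => simp
  | succ k ih =>
    rw [Nat.mul_succ, prod_range_add, ih, pow_succ]
    congr 1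
    refine prod_congr rfl fun s _ => ?_
    rw [add_comm, mul_comm]
    exact hf.nat_mul k s

theorem BrauerGraph.val_eq_minimalPeriod (Γ : BrauerGraph) (h : Γ.H) :
    Γ.val (Γ.v h) = minimalPeriod Γ.σ h := by
  rw [← Γ.σ.card_sameCycle]
  exact Nat.card_congr (Equiv.subtypeEquivRight fun y => eq_comm.trans (Γ.v_eq_iff h y))

theorem BrauerGraph.isPeriodicPt_val (Γ : BrauerGraph) (h : Γ.H) :
    IsPeriodicPt Γ.σ (Γ.val (Γ.v h)) h := by
  rw [Γ.val_eq_minimalPeriod]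
  exact isPeriodicPt_minimalPeriod _ _

namespace BrauerAction

section Group

variable {G : Type} [Group G] {Γ : BrauerGraph} (A : BrauerAction G Γ)

def orbPerm : Equiv.Perm (Quotient A.orbSetoid) :=
  Quotient.congr Γ.σ fun x y =>
    exists_congr fun g => by rw [A.comm_σ, Γ.σ.injective.eq_iff]

theorem semiconj_mk : Semiconj (Quotient.mk A.orbSetoid) Γ.σ A.orbPerm := fun _ => rfl

theorem orbPerm_zpow_mk (n : ℤ) (x : Γ.H) :
    (A.orbPerm ^ n) (Quotient.mk _ x) = Quotient.mk A.orbSetoid ((Γ.σ ^ n) x) := by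
  induction n generalizing x with
  | zero => rfl
  | succ n ih =>
    rw [zpow_add_one, zpow_add_one, Equiv.Perm.mul_apply, Equiv.Perm.mul_apply, ← ih]
    rfl
  | pred n ih =>
    rw [zpow_sub_one, zpow_sub_one, Equiv.Perm.mul_apply, Equiv.Perm.mul_apply, ← ih]
    rfl

theorem orbPerm_pow_mk (n : ℕ) (x : Γ.H) :
    (A.orbPerm ^ n) (Quotient.mk _ x) = Quotient.mk A.orbSetoid ((Γ.σ ^ n) x) := by
  exact_mod_cast A.orbPerm_zpow_mk n x

theorem card_quotient_subOrbSetoid (P : Γ.H → Prop) :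
    Nat.card (Quotient (A.subOrbSetoid P)) =
      Nat.card {q : Quotient A.orbSetoid // ∃ x, P x ∧ Quotient.mk _ x = q} := by
  let f : Quotient (A.subOrbSetoid P) → Quotient A.orbSetoid :=
    Quotient.map Subtype.val fun _ _ => id
  have hf : Injective f := by
    rintro ⟨a⟩ ⟨b⟩ hab
    exact Quotient.sound (Quotient.exact (s := A.orbSetoid) hab)
  rw [← Nat.card_range_of_injective hf]
  congr
  ext q
  constructor
  · rintro ⟨⟨x, hx⟩, rfl⟩
    exact ⟨x, hx, rfl⟩
  · rintro ⟨x, hx, rfl⟩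
    exact ⟨Quotient.mk _ ⟨x, hx⟩, rfl⟩

theorem orbVal_eq_minimalPeriod (h : Γ.H) :
    A.orbVal (Γ.v h) = minimalPeriod A.orbPerm (Quotient.mk _ h) := by
  rw [orbVal, card_quotient_subOrbSetoid, ← A.orbPerm.card_sameCycle]
  refine Nat.card_congr (Equiv.subtypeEquivRight fun q => ?_)
  induction q using Quotient.inductionOn with | h x => ?_
  simp only [Equiv.Perm.SameCycle, orbPerm_zpow_mk]
  constructor
  · rintro ⟨y, ⟨a, ha⟩, hy⟩
    obtain ⟨n, hn⟩ := (Γ.v_eq_iff _ _).1 ha.symm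
    exact ⟨n, hn ▸ (Quotient.sound (s := A.orbSetoid) ⟨a, rfl⟩).symm.trans hy⟩
  · rintro ⟨n, hn⟩
    exact ⟨_, ⟨1, by simpa using ((Γ.v_eq_iff h _).2 ⟨n, rfl⟩).symm⟩, hn⟩

theorem orbVal_pos (h : Γ.H) : 0 < A.orbVal (Γ.v h) := by
  rw [orbVal_eq_minimalPeriod]
  exact minimalPeriod_pos_of_mem_periodicPts (A.orbPerm.injective.mem_periodicPts _)

theorem orbVal_dvd_val (h : Γ.H) : A.orbVal (Γ.v h) ∣ Γ.val (Γ.v h) := by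
  rw [orbVal_eq_minimalPeriod]
  exact ((Γ.isPeriodicPt_val h).map A.semiconj_mk).minimalPeriod_dvd

theorem mbar_eq_div_mul (h : Γ.H) :
    A.mbar (Γ.v h) = Γ.val (Γ.v h) / A.orbVal (Γ.v h) * Γ.m (Γ.v h) :=
  (Nat.div_mul_right_comm (A.orbVal_dvd_val h) _).symm

theorem pow_val_apply_of_mk_eq {x h : Γ.H}
    (hx : Quotient.mk A.orbSetoid x = Quotient.mk A.orbSetoid h) :
    (Γ.σ ^ Γ.val (Γ.v h)) x = x := by
  obtain ⟨g, rfl⟩ := Quotient.exact hx.symm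
  exact ((Γ.isPeriodicPt_val h).map (A.comm_σ g)).eq

end Group

section CommGroup

variable {G : Type} [CommGroup G] {Γ : BrauerGraph} (A : BrauerAction G Γ)
  {rep : Quotient A.orbSetoid → Γ.H} {W : Quotient A.orbSetoid → G}

theorem e_prod_apply_rep
    (hW : ∀ q, A.e (W q) (rep (A.orbPerm q)) = Γ.σ (rep q)) (q : Quotient A.orbSetoid)
    (t : ℕ) :
    A.e (∏ s ∈ range t, W ((A.orbPerm ^ s) q)) (rep ((A.orbPerm ^ t) q)) =
      (Γ.σ ^ t) (rep q) := by
  induction t with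
  | zero => simp
  | succ t ih =>
    rw [prod_range_succ, map_mul, Equiv.Perm.mul_apply, pow_succ', Equiv.Perm.mul_apply, hW,
      A.comm_σ, ih, pow_succ', Equiv.Perm.mul_apply]

theorem prod_pow_val_div_orbVal_eq_one (hfree : A.IsFree)
    (hrep : ∀ q, Quotient.mk A.orbSetoid (rep q) = q)
    (hW : ∀ q, A.e (W q) (rep (A.orbPerm q)) = Γ.σ (rep q)) (h : Γ.H) :
    (∏ s ∈ range (A.orbVal (Γ.v h)), W ((A.orbPerm ^ s) (Quotient.mk _ h))) ^
      (Γ.val (Γ.v h) / A.orbVal (Γ.v h)) = 1 := by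
  set q := Quotient.mk A.orbSetoid h
  set c := Γ.val (Γ.v h)
  obtain ⟨k, hk⟩ : A.orbVal (Γ.v h) ∣ c := A.orbVal_dvd_val h
  have hperiodic : Periodic (fun s => W ((A.orbPerm ^ s) q)) (A.orbVal (Γ.v h)) := fun s => by
    rw [orbVal_eq_minimalPeriod]
    exact congrArg W iterate_add_minimalPeriod_eq
  have hcq : (A.orbPerm ^ c) q = q := ((Γ.isPeriodicPt_val h).map A.semiconj_mk).eq
  rw [hk, Nat.mul_div_cancel_left _ (A.orbVal_pos h)]
  apply hfree _ (rep q)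
  calc A.e _ (rep q)
      = A.e (∏ s ∈ range c, W ((A.orbPerm ^ s) q)) (rep ((A.orbPerm ^ c) q)) := by
        rw [hcq, hk, hperiodic.prod_range_mul]
    _ = (Γ.σ ^ c) (rep q) := A.e_prod_apply_rep hW q c
    _ = rep q := A.pow_val_apply_of_mk_eq (hrep q)

end CommGroup

end BrauerAction

theorem associated_weighting_is_Brauer_general {G : Type} [CommGroup G]
    (Γ : BrauerGraph) (A : BrauerAction G Γ) (hfree : A.IsFree)
    (rep : Quotient A.orbSetoid → Γ.H)
    (hrep : ∀ q, Quotient.mk A.orbSetoid (rep q) = q)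
    (W : Quotient A.orbSetoid → G)
    (hWdef : ∀ q, A.e (W q) (rep (Quotient.mk A.orbSetoid (Γ.σ (rep q)))) = Γ.σ (rep q))
    (h : Γ.H) :
    ∀ ω : G,
      ω = ∏ t ∈ Finset.range (A.orbVal (Γ.v h)),
            W (Quotient.mk A.orbSetoid ((Γ.σ ^ t) h)) →
      orderOf ω ∣ A.mbar (Γ.v h) := by
  intro ω hω
  have hW : ∀ q, A.e (W q) (rep (A.orbPerm q)) = Γ.σ (rep q) := fun q => by
    simpa only [A.semiconj_mk (rep q), hrep] using hWdef q
  have hω' : ω = ∏ s ∈ range (A.orbVal (Γ.v h)), W ((A.orbPerm ^ s) (Quotient.mk _ h)) := by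
    simp only [hω, A.orbPerm_pow_mk]
  rw [A.mbar_eq_div_mul]
  have hpow := A.prod_pow_val_div_orbVal_eq_one hfree hrep hW h
  exact (orderOf_dvd_of_pow_eq_one (hω' ▸ hpow)).mul_right _

/-- The successor weighting `W` on the orbit graph `Γ̄` associated to a
free Brauer action of a finite abelian group `G` on a Brauer graph `(Γ, 𝔬, m)` is a
Brauer weighting: for every orbit vertex `μ̄` (represented by the vertex of a half-edge
`h`), the order of `ω_{μ̄}` divides `m̄(μ̄)`. -/
theorem associated_weighting_is_Brauer {G : Type} [CommGroup G] [Fintype G]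
    (Γ : BrauerGraph) (A : BrauerAction G Γ) (hfree : A.IsFree)
    (rep : Quotient A.orbSetoid → Γ.H)
    (hrep : ∀ q, Quotient.mk A.orbSetoid (rep q) = q)
    (W : Quotient A.orbSetoid → G)
    (hWdef : ∀ q, A.e (W q) (rep (Quotient.mk A.orbSetoid (Γ.σ (rep q)))) = Γ.σ (rep q))
    (h : Γ.H) :
    ∀ ω : G,
      ω = ∏ t ∈ Finset.range (A.orbVal (Γ.v h)),
            W (Quotient.mk A.orbSetoid ((Γ.σ ^ t) h)) →
      orderOf ω ∣ A.mbar (Γ.v h) :=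
  associated_weighting_is_Brauer_general Γ A hfree rep hrep W hWdef h
end

section
/- Let (Δ, 𝔬, m) be a Brauer graph, n = lcm{m(μ) : μ ∈ Δ₀}, and G = ℤ_n cyclic of order n with generator g. For each vertex μ fix one incident edge i_μ and define W(i,j) = g^{n/m(μ)} if i = i_μ and (i,j) ∈ 𝒵_μ, and W(i,j) = id otherwise. Then W is a Brauer weighting with ord(μ) = m(μ) for every vertex μ, and hence the covering graph multiplicity m_W(μ_d) = m(μ)/ord(μ) is identically 1. -/
/-- Let `(Δ, 𝔬, m)` be a Brauer graph, `n = lcm{m(μ)}`, `G = ℤ_n` cyclic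
with generator `g`.  Fix a distinguished incident (half-)edge `c μ` at each vertex `μ`
and let `W` give weight `g^{n/m(μ)}` to the successor pair starting at `c μ` and `id`
to all others.  Then `W` is a Brauer weighting with `ord(μ) = m(μ)` for every vertex,
so the covering multiplicity `m_W(μ_d) = m(μ)/ord(μ)` is identically `1`. -/
theorem multiplicity_removal (Γ : BrauerGraph) (n : ℕ)
    (hn : n = Finset.univ.lcm Γ.m)
    (c : Γ.V → Γ.H) (hc : ∀ μ, Γ.v (c μ) = μ)
    (W : Γ.H → Multiplicative (ZMod n))
    (hWdef : ∀ h : Γ.H, W h =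
      if h = c (Γ.v h) then (Multiplicative.ofAdd (1 : ZMod n)) ^ (n / Γ.m (Γ.v h)) else 1) :
    ∀ μ : Γ.V,
      orderOf (Γ.omega W μ) = Γ.m μ ∧
      orderOf (Γ.omega W μ) ∣ Γ.m μ ∧
      Γ.m μ / orderOf (Γ.omega W μ) = 1 := by
  intro μ
  have hmdvd : Γ.m μ ∣ n := hn ▸ Finset.dvd_lcm (Finset.mem_univ μ)
  have hmpos := Γ.m_pos μ
  have hn0 : n ≠ 0 := by
    subst hn
    intro h0
    rw [Finset.lcm_eq_zero_iff] at h0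
    obtain ⟨ν, -, hν⟩ := Set.mem_image _ _ _ |>.1 h0
    exact (Γ.m_pos ν).ne' hν
  have homega : Γ.omega W μ = (Multiplicative.ofAdd (1 : ZMod n)) ^ (n / Γ.m μ) := by
    unfold BrauerGraph.omega
    rw [Finset.prod_eq_single (c μ)]
    · rw [hWdef (c μ), hc μ, if_pos rfl]
    · intro h hmem hne
      rw [Finset.mem_filter] at hmem
      rw [hWdef h, hmem.2, if_neg hne]
    · intro hnot
      exact absurd (Finset.mem_filter.2 ⟨Finset.mem_univ (c μ), hc μ⟩) hnot
  have hord : orderOf (Γ.omega W μ) = Γ.m μ := by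
    rw [homega]
    have : (Multiplicative.ofAdd (1 : ZMod n)) ^ (n / Γ.m μ)
        = Multiplicative.ofAdd (((n / Γ.m μ : ℕ) : ZMod n)) := by
      rw [← ofAdd_nsmul]
      congr 1
      simp [nsmul_eq_mul]
    rw [this, orderOf_ofAdd_eq_addOrderOf, ZMod.addOrderOf_coe _ hn0]
    have hdvd2 : n / Γ.m μ ∣ n := Nat.div_dvd_of_dvd hmdvd
    rw [Nat.gcd_eq_right hdvd2, Nat.div_div_self hmdvd hn0]
  exact ⟨hord, hord ▸ dvd_rfl, by rw [hord, Nat.div_self hmpos]⟩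
end

section
/- Let (Δ, 𝔬, m) be a Brauer graph with loops ℓ₁, …, ℓ_n, let p > 1, and let G = (ℤ_p)^n with z_k the element with generator g in the k-th component and identity elsewhere. Define W: 𝒵_Δ → G by W(i,j) = z_k if i is the first occurrence of the loop ℓ_k in the successor sequence of the chosen distinguished edge at its vertex, W(i,j) = z_k^{-1} if i is the second occurrence of ℓ_k, and W(i,j) = id otherwise. Then ω_μ = id for every vertex μ, W is a Brauer weighting, and the Brauer covering graph Δ_W contains no loops. -/
/-!
Since every `ω_μ` is trivial, `W` is a coboundary along the successor cycles: `S (σ i) = S i * W i`,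
where `S i` is the weight of the successor path from a fixed base half-edge at the vertex of `i`.
Then `(v i, g / S i)` is constant on the classes `[i, H_{μ,s}]`, so a loop `ℓ_g` of `Δ_W` would
force `S ℓ = S ℓ̂`. But walking from `ℓ` to `ℓ̂` along the successor sequence multiplies `S` by an
element whose `ℓ`-coordinate is `z ≠ 1`, because `ℓ̂` is reached before `ℓ` recurs.
-/

namespace BrauerGraph

variable (Γ : BrauerGraph) {G : Type} [CommGroup G]

lemma v_pow_apply (h : Γ.H) (n : ℕ) : Γ.v ((Γ.σ ^ n) h) = Γ.v h :=
  ((Γ.v_eq_iff h _).mpr ⟨n, by rw [zpow_natCast]⟩).symm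

lemma v_σ (h : Γ.H) : Γ.v (Γ.σ h) = Γ.v h := by
  simpa using Γ.v_pow_apply h 1

lemma exists_pow_apply_eq {h h' : Γ.H} (hv : Γ.v h = Γ.v h') : ∃ n : ℕ, (Γ.σ ^ n) h = h' :=
  Equiv.Perm.SameCycle.exists_nat_pow_eq ((Γ.v_eq_iff h h').mp hv)

noncomputable def base (μ : Γ.V) : Γ.H := (Γ.v_surj μ).choose

lemma v_base (μ : Γ.V) : Γ.v (Γ.base μ) = μ := (Γ.v_surj μ).choose_spec

noncomputable def period (μ : Γ.V) : ℕ := Function.minimalPeriod Γ.σ (Γ.base μ)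

lemma period_pos (μ : Γ.V) : 0 < Γ.period μ :=
  Function.minimalPeriod_pos_of_mem_periodicPts (Γ.σ.injective.mem_periodicPts _)

lemma pow_period_apply_base (μ : Γ.V) : (Γ.σ ^ Γ.period μ) (Γ.base μ) = Γ.base μ := by
  rw [← Equiv.Perm.iterate_eq_pow]
  exact Function.iterate_minimalPeriod

lemma pow_mod_period_apply_base (μ : Γ.V) (n : ℕ) :
    (Γ.σ ^ (n % Γ.period μ)) (Γ.base μ) = (Γ.σ ^ n) (Γ.base μ) := by
  simp only [← Equiv.Perm.iterate_eq_pow]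
  exact Function.iterate_mod_minimalPeriod_eq

lemma eq_of_pow_apply_base_eq {μ : Γ.V} {a b : ℕ} (ha : a < Γ.period μ) (hb : b < Γ.period μ)
    (hab : (Γ.σ ^ a) (Γ.base μ) = (Γ.σ ^ b) (Γ.base μ)) : a = b := by
  simp only [← Equiv.Perm.iterate_eq_pow] at hab
  exact (Function.iterate_eq_iterate_iff_of_lt_minimalPeriod ha hb).mp hab

noncomputable def stepsFromBase (h : Γ.H) : ℕ :=
  Nat.find (Γ.exists_pow_apply_eq (Γ.v_base (Γ.v h)))

lemma pow_stepsFromBase_apply (h : Γ.H) :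
    (Γ.σ ^ Γ.stepsFromBase h) (Γ.base (Γ.v h)) = h :=
  Nat.find_spec (Γ.exists_pow_apply_eq (Γ.v_base (Γ.v h)))

lemma stepsFromBase_lt_period (h : Γ.H) : Γ.stepsFromBase h < Γ.period (Γ.v h) :=
  (Nat.find_min' _ (by rw [pow_mod_period_apply_base, pow_stepsFromBase_apply])).trans_lt
    (Nat.mod_lt _ (Γ.period_pos _))

lemma stepsFromBase_eq {h : Γ.H} {μ : Γ.V} (hμ : Γ.v h = μ) {n : ℕ} (hn : n < Γ.period μ)
    (hnh : (Γ.σ ^ n) (Γ.base μ) = h) : Γ.stepsFromBase h = n := by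
  subst hμ
  exact Γ.eq_of_pow_apply_base_eq (Γ.stepsFromBase_lt_period h) hn
    ((Γ.pow_stepsFromBase_apply h).trans hnh.symm)

lemma wpath_succ (W : Γ.H → G) (h : Γ.H) (n : ℕ) :
    Γ.wpath W h (n + 1) = Γ.wpath W h n * W ((Γ.σ ^ n) h) :=
  Finset.prod_range_succ _ _

lemma wpath_base_period (W : Γ.H → G) (μ : Γ.V) :
    Γ.wpath W (Γ.base μ) (Γ.period μ) = Γ.omega W μ := by
  refine Finset.prod_nbij (fun t => (Γ.σ ^ t) (Γ.base μ)) (fun t _ => ?_)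
    (fun a ha b hb hab => Γ.eq_of_pow_apply_base_eq (Finset.mem_range.mp ha)
      (Finset.mem_range.mp hb) hab) (fun y hy => ?_) (fun _ _ => rfl)
  · simp [v_pow_apply, v_base]
  · obtain ⟨n, hn⟩ := Γ.exists_pow_apply_eq ((Γ.v_base μ).trans (Finset.mem_filter.mp hy).2.symm)
    exact ⟨n % Γ.period μ, Finset.mem_range.mpr (Nat.mod_lt _ (Γ.period_pos μ)),
      (Γ.pow_mod_period_apply_base μ n).trans hn⟩

noncomputable def potential (W : Γ.H → G) (h : Γ.H) : G :=
  Γ.wpath W (Γ.base (Γ.v h)) (Γ.stepsFromBase h)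

lemma potential_σ (W : Γ.H → G) (h : Γ.H) (hω : Γ.omega W (Γ.v h) = 1) :
    Γ.potential W (Γ.σ h) = Γ.potential W h * W h := by
  have hv := Γ.v_σ h
  have hlt := Γ.stepsFromBase_lt_period h
  have hstep : (Γ.σ ^ (Γ.stepsFromBase h + 1)) (Γ.base (Γ.v h)) = Γ.σ h := by
    rw [pow_succ', Equiv.Perm.mul_apply, pow_stepsFromBase_apply]
  have hW : W h = W ((Γ.σ ^ Γ.stepsFromBase h) (Γ.base (Γ.v h))) := by
    rw [pow_stepsFromBase_apply]
  rw [potential, potential, hv, hW, ← wpath_succ]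
  rcases (show Γ.stepsFromBase h + 1 ≤ Γ.period (Γ.v h) from hlt).lt_or_eq with hsucc | hsucc
  · rw [Γ.stepsFromBase_eq hv hsucc hstep]
  · rw [hsucc, pow_period_apply_base] at hstep
    rw [Γ.stepsFromBase_eq hv (Γ.period_pos _) hstep, hsucc, wpath_base_period, hω]
    rfl

lemma apply_pow_eq_mul_wpath {W : Γ.H → G} {S : Γ.H → G} (hS : ∀ h, S (Γ.σ h) = S h * W h)
    (h : Γ.H) (n : ℕ) : S ((Γ.σ ^ n) h) = S h * Γ.wpath W h n := by
  induction n with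
  | zero => simp [wpath]
  | succ n ih => rw [pow_succ', Equiv.Perm.mul_apply, hS, ih, wpath_succ, mul_assoc]

lemma eqvGen_covRel_invariant {W : Γ.H → G} {S : Γ.H → G} (hS : ∀ h, S (Γ.σ h) = S h * W h)
    (hω : ∀ μ, Γ.omega W μ = 1) {x y : Γ.H × G} (hxy : Relation.EqvGen (Γ.covRel W) x y) :
    (Γ.v x.1, x.2 / S x.1) = (Γ.v y.1, y.2 / S y.1) := by
  induction hxy with
  | rel x y hxy =>
    rcases hxy with ⟨h₁, h₂⟩ | ⟨h₁, h₂⟩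
    · rw [h₁, h₂, hS, v_σ, mul_div_mul_right_eq_div]
    · rw [h₁, h₂, hω, mul_one]
  | refl => rfl
  | symm _ _ _ ih => exact ih.symm
  | trans _ _ _ _ _ ih₁ ih₂ => exact ih₁.trans ih₂

lemma exists_pow_apply_eq_ι {h : Γ.H} (hloop : Γ.v (Γ.ι h) = Γ.v h) :
    ∃ k, (Γ.σ ^ k) h = Γ.ι h ∧ ∀ t ∈ Finset.Ico 1 k, (Γ.σ ^ t) h ≠ h ∧ (Γ.σ ^ t) h ≠ Γ.ι h := by
  have hex := Γ.exists_pow_apply_eq hloop.symm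
  obtain ⟨k, hk, hmin⟩ : ∃ k, (Γ.σ ^ k) h = Γ.ι h ∧ ∀ m < k, (Γ.σ ^ m) h ≠ Γ.ι h :=
    ⟨Nat.find hex, Nat.find_spec hex, fun m => Nat.find_min hex⟩
  refine ⟨k, hk, fun t ht => ⟨fun hfix => ?_, hmin t (Finset.mem_Ico.mp ht).2⟩⟩
  obtain ⟨ht₁, htk⟩ := Finset.mem_Ico.mp ht
  refine hmin (k - t) (by omega) ?_
  rw [← hk, ← congrArg (Γ.σ ^ (k - t)) hfix, ← Equiv.Perm.mul_apply, ← pow_add,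
    Nat.sub_add_cancel htk.le]

variable (sel : Γ.H → Bool) (p : ℕ)

/-- The loops `ℓ_k`, each represented by its first occurrence; `G = (ℤ_p)^n` is
`SelectedLoop sel → Multiplicative (ZMod p)` and `z_k` is `Pi.mulSingle ℓ_k (ofAdd 1)`. -/
abbrev SelectedLoop : Type := {l : Γ.H // Γ.v (Γ.ι l) = Γ.v l ∧ sel l = true}

def loopWeight (h : Γ.H) (l : Γ.SelectedLoop sel) : Multiplicative (ZMod p) :=
  if l.1 = h then Multiplicative.ofAdd (1 : ZMod p)
  else if l.1 = Γ.ι h then (Multiplicative.ofAdd (1 : ZMod p))⁻¹ else 1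

variable {Γ sel p}

lemma loopWeight_self (l : Γ.SelectedLoop sel) :
    Γ.loopWeight sel p l.1 l = Multiplicative.ofAdd 1 :=
  if_pos rfl

lemma loopWeight_ι (l : Γ.SelectedLoop sel) :
    Γ.loopWeight sel p (Γ.ι l.1) l = (Multiplicative.ofAdd 1)⁻¹ := by
  rw [loopWeight, if_neg (Γ.ι_ne l.1).symm, if_pos (Γ.ι_invol l.1).symm]

lemma loopWeight_of_ne {h : Γ.H} {l : Γ.SelectedLoop sel}
    (hl : h ≠ l.1) (hι : h ≠ Γ.ι l.1) : Γ.loopWeight sel p h l = 1 := by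
  rw [loopWeight, if_neg (Ne.symm hl), if_neg fun e => hι (by rw [e, Γ.ι_invol])]

/-- The two half-edges of each loop lie at the same vertex, so their weights cancel in `ω_μ`. -/
lemma omega_loopWeight (μ : Γ.V) : Γ.omega (Γ.loopWeight sel p) μ = 1 := by
  funext l
  rw [omega, Finset.prod_apply]
  by_cases hμ : Γ.v l.1 = μ
  · rw [Finset.prod_eq_mul l.1 (Γ.ι l.1) (Γ.ι_ne l.1).symm
      (fun h _ hne => loopWeight_of_ne hne.1 hne.2) (fun hl => absurd (by simpa) hl)
      (fun hl => absurd (by simpa [l.2.1]) hl), loopWeight_self, loopWeight_ι, mul_inv_cancel]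
    rfl
  · refine Finset.prod_eq_one fun h hh => loopWeight_of_ne ?_ ?_ <;> rintro rfl
    · exact hμ (Finset.mem_filter.mp hh).2
    · exact hμ (l.2.1.symm.trans (Finset.mem_filter.mp hh).2)

/-- Along the successor path from `l` to `ι l` only the first step carries the coordinate `l`. -/
lemma loopWeight_cocycle_ι_ne (hp : 1 < p)
    {S : Γ.H → Γ.SelectedLoop sel → Multiplicative (ZMod p)}
    (hS : ∀ h, S (Γ.σ h) = S h * Γ.loopWeight sel p h) (l : Γ.SelectedLoop sel) :
    S (Γ.ι l.1) ≠ S l.1 := by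
  have : Nontrivial (ZMod p) := ZMod.nontrivial_iff.mpr hp.ne'
  obtain ⟨k, hk, hmid⟩ := Γ.exists_pow_apply_eq_ι l.2.1
  have hk0 : 0 < k := Nat.pos_of_ne_zero fun h0 => Γ.ι_ne l.1 (by simpa [h0] using hk.symm)
  intro hSl
  have hpath : Γ.wpath (Γ.loopWeight sel p) l.1 k = 1 := by
    have := Γ.apply_pow_eq_mul_wpath hS l.1 k
    rwa [hk, hSl, left_eq_mul] at this
  have hrest : ∀ t ∈ Finset.range k, t ≠ 0 → Γ.loopWeight sel p ((Γ.σ ^ t) l.1) l = 1 := by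
    intro t ht ht0
    have hm := hmid t (Finset.mem_Ico.mpr ⟨by omega, Finset.mem_range.mp ht⟩)
    exact loopWeight_of_ne hm.1 hm.2
  have hcoord := congrFun hpath l
  rw [wpath, Finset.prod_apply,
    Finset.prod_eq_single_of_mem 0 (Finset.mem_range.mpr hk0) hrest] at hcoord
  simp [loopWeight_self] at hcoord

lemma loopWeight_cocycle_ι_ne_of_loop (hsel : ∀ h, Γ.v (Γ.ι h) = Γ.v h → sel (Γ.ι h) = !sel h)
    (hp : 1 < p) {S : Γ.H → Γ.SelectedLoop sel → Multiplicative (ZMod p)}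
    (hS : ∀ h, S (Γ.σ h) = S h * Γ.loopWeight sel p h) {h : Γ.H}
    (hloop : Γ.v (Γ.ι h) = Γ.v h) : S (Γ.ι h) ≠ S h := by
  cases hh : sel h
  · have hι : Γ.v (Γ.ι (Γ.ι h)) = Γ.v (Γ.ι h) := by rw [Γ.ι_invol, hloop]
    have := loopWeight_cocycle_ι_ne hp hS ⟨Γ.ι h, hι, by rw [hsel h hloop, hh]; rfl⟩
    exact fun e => this (by simp only [Γ.ι_invol, e])
  · exact loopWeight_cocycle_ι_ne hp hS ⟨h, hloop, hh⟩

end BrauerGraph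

/-- removal of loops: Let `(Δ, 𝔬, m)` be a Brauer graph whose loops are
listed via a selection `sel` of one half-edge of each loop (a half-edge `h` with
`v(ι h) = v h` and `sel h = true` is the "first occurrence" of the loop), let `p > 1`
and `G = (ℤ_p)^{loops}`, and let `W` assign to a loop half-edge its basis element
`z_k` (first occurrence) or `z_k⁻¹` (second occurrence), and `id` to all other
half-edges.  Then `ω_μ = id` for every vertex, `W` is a Brauer weighting, and the
Brauer covering graph `Δ_W` contains no loops. -/
theorem loop_removal (Γ : BrauerGraph) (p : ℕ) (hp : 1 < p)
    (sel : Γ.H → Bool)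
    (hsel : ∀ h : Γ.H, Γ.v (Γ.ι h) = Γ.v h → sel (Γ.ι h) = !sel h)
    (W : Γ.H → ({l : Γ.H // Γ.v (Γ.ι l) = Γ.v l ∧ sel l = true} → Multiplicative (ZMod p)))
    (hWdef : ∀ (h : Γ.H) (l : {l : Γ.H // Γ.v (Γ.ι l) = Γ.v l ∧ sel l = true}),
      W h l = if l.1 = h then Multiplicative.ofAdd (1 : ZMod p)
        else if l.1 = Γ.ι h then (Multiplicative.ofAdd (1 : ZMod p))⁻¹ else 1) :
    (∀ μ : Γ.V, Γ.omega W μ = 1) ∧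
    (∀ μ : Γ.V, orderOf (Γ.omega W μ) ∣ Γ.m μ) ∧
    (∀ (h : Γ.H) (g : {l : Γ.H // Γ.v (Γ.ι l) = Γ.v l ∧ sel l = true} → Multiplicative (ZMod p)),
      ¬ Relation.EqvGen (Γ.covRel W) (h, g) (Γ.ι h, g)) := by
  obtain rfl : W = Γ.loopWeight sel p := funext₂ hWdef
  have hω : ∀ μ, Γ.omega (Γ.loopWeight sel p) μ = 1 := BrauerGraph.omega_loopWeight
  refine ⟨hω, fun μ => by rw [hω μ, orderOf_one]; exact one_dvd _, fun h g hE => ?_⟩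
  have hS : ∀ h, Γ.potential _ (Γ.σ h) = Γ.potential _ h * Γ.loopWeight sel p h :=
    fun h => Γ.potential_σ _ h (hω _)
  obtain ⟨hv, hg⟩ := Prod.mk.inj (Γ.eqvGen_covRel_invariant hS hω hE)
  exact BrauerGraph.loopWeight_cocycle_ι_ne_of_loop hsel hp hS hv.symm
    (div_right_injective hg).symm
end
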